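/- Let V be a finite-dimensional real vector space, Λ a lattice in V, and let P and Q be integers greater than 1 that are multiplicatively independent. Let f : V → ℝ be a discretely supported function such that f_P(x) = f(Px) − f(x) and f_Q(x) = f(Qx) − f(x) are both Λ-periodic. Let z ∉ ℚΛ be a point such that f_P(P^n z) = 0 for all integers n < 0, and let n(z) ≥ 0 be an integer such that f_P(P^n z) = 0 for all n > n(z). Then ∑_{i=0}^{n(z)} f_P(Pⁱ z) = 0. -/

import Mathlib

open Filter Function Topology

/-- `Λ` is a lattice in the finite-dimensional real vector space `V`:
it is the `ℤ`-span of an `ℝ`-basis of `V`. -/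
def IsLattice (V : Type*) [NormedAddCommGroup V] [NormedSpace ℝ V]
    [FiniteDimensional ℝ V] (Λ : Set V) : Prop :=
  ∃ b : Module.Basis (Fin (Module.finrank ℝ V)) ℝ V,
    Λ = (Submodule.span ℤ (Set.range b) : Submodule ℤ V)

/-- `f` is discretely supported: its support has no accumulation points in `V`. -/
def DiscretelySupported {V : Type*} [NormedAddCommGroup V] {α : Type*} [Zero α]
    (f : V → α) : Prop :=
  ∀ x : V, ¬ AccPt x (𝓟 (Function.support f))

/-- `f` is `Λ`-periodic. -/
def IsPeriodic {V : Type*} [AddCommGroup V] {α : Type*} (Λ : Set V) (f : V → α) : Prop :=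
  ∀ x : V, ∀ l ∈ Λ, f (x + l) = f x

/-- `P` and `Q` are multiplicatively independent: `P ^ a = Q ^ b` with integer exponents
`a, b` implies `a = b = 0`. -/
def MultIndep (P Q : ℤ) : Prop :=
  ∀ a b : ℤ, (P : ℚ) ^ a = (Q : ℚ) ^ b → a = 0 ∧ b = 0

/-- `ℚΛ`: the `ℚ`-span of `Λ` in `V`, i.e. the set of finite `ℚ`-linear combinations of
elements of `Λ`. -/
def ratSpan {V : Type*} [AddCommGroup V] [Module ℝ V] (Λ : Set V) : Set V :=
  {v : V | ∃ (n : ℕ) (c : Fin n → ℚ) (l : Fin n → V),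
    (∀ i, l i ∈ Λ) ∧ v = ∑ i, (c i : ℝ) • l i}

-- auxiliary lemmas

lemma exists_zero_of_tendsto {V : Type*} [NormedAddCommGroup V] {f : V → ℝ}
    (hf : DiscretelySupported f) {x : V} {u : ℕ → V}
    (hu : Tendsto u atTop (𝓝 x)) (hne : ∀ n, u n ≠ x) :
    ∃ n, f (u n) = 0 := by
  by_contra h
  push_neg at h
  apply hf x
  rw [accPt_iff_nhds]
  intro U hU
  obtain ⟨n, hn⟩ := (hu.eventually_mem hU).exists
  exact ⟨u n, ⟨hn, h n⟩, hne n⟩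

lemma tendsto_zpow_neg_smul {V : Type*} [NormedAddCommGroup V] [NormedSpace ℝ V]
    {c : ℝ} (hc : 1 < c) (y : V) :
    Tendsto (fun n : ℕ => c ^ (-(n : ℤ)) • y) atTop (𝓝 0) := by
  have h0 : Tendsto (fun n : ℕ => (c⁻¹) ^ n) atTop (𝓝 0) :=
    tendsto_pow_atTop_nhds_zero_of_lt_one (by positivity) (inv_lt_one_of_one_lt₀ hc)
  have h1 := h0.smul_const y
  rw [zero_smul] at h1
  simpa [zpow_neg, zpow_natCast, ← inv_pow] using h1

/-- **Chain vanishing.** If `z ∉ ℚΛ` begins a primitive `P`-chain (i.e. `f_P(P^n z) = 0`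
for all `n < 0`) with exponent at most `n(z)` (i.e. `f_P(P^n z) = 0` for all `n > n(z)`),
then `∑_{i=0}^{n(z)} f_P(P^i z) = 0`. -/
theorem chain_vanishing
    (V : Type*) [NormedAddCommGroup V] [NormedSpace ℝ V] [FiniteDimensional ℝ V]
    (Λ : Set V) (hΛ : IsLattice V Λ)
    (P Q : ℤ) (hP : 1 < P) (hQ : 1 < Q) (hPQ : MultIndep P Q)
    (f : V → ℝ) (hf : DiscretelySupported f)
    (fP : V → ℝ) (hfPdef : ∀ x : V, fP x = f ((P : ℝ) • x) - f x)
    (fQ : V → ℝ) (hfQdef : ∀ x : V, fQ x = f ((Q : ℝ) • x) - f x)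
    (hfP : IsPeriodic Λ fP) (hfQ : IsPeriodic Λ fQ)
    (z : V) (hz : z ∉ ratSpan Λ)
    (hneg : ∀ n : ℤ, n < 0 → fP (((P : ℝ) ^ n) • z) = 0)
    (nz : ℕ) (hnz : ∀ n : ℤ, (nz : ℤ) < n → fP (((P : ℝ) ^ n) • z) = 0) :
    ∑ i ∈ Finset.range (nz + 1), fP (((P : ℝ) ^ (i : ℤ)) • z) = 0 := by
  classical
  obtain ⟨b, hΛL⟩ := hΛ
  set L : Submodule ℤ V := Submodule.span ℤ (Set.range b) with hLdef
  have hP1 : (1:ℝ) < (P:ℝ) := by exact_mod_cast hP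
  have hQ1 : (1:ℝ) < (Q:ℝ) := by exact_mod_cast hQ
  have hP0 : (P:ℝ) ≠ 0 := by positivity
  have hQ0 : (Q:ℝ) ≠ 0 := by positivity
  have hz0 : z ≠ 0 := by
    intro h
    exact hz ⟨0, ![], ![], fun i => i.elim0, by simp [h]⟩
  have fPstep : ∀ n : ℤ, fP ((P:ℝ)^n • z) = f ((P:ℝ)^(n+1) • z) - f ((P:ℝ)^n • z) := by
    intro n
    have e : (P:ℝ) • ((P:ℝ)^n • z) = (P:ℝ)^(n+1) • z := by
      rw [smul_smul, ← zpow_one_add₀ hP0, add_comm]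
    rw [hfPdef, e]
  have fQstep : ∀ (y : V) (n : ℤ), fQ ((Q:ℝ)^n • y) = f ((Q:ℝ)^(n+1) • y) - f ((Q:ℝ)^n • y) := by
    intro y n
    have e : (Q:ℝ) • ((Q:ℝ)^n • y) = (Q:ℝ)^(n+1) • y := by
      rw [smul_smul, ← zpow_one_add₀ hQ0, add_comm]
    rw [hfQdef, e]
  -- backward constancy
  have back : ∀ k : ℕ, f ((P:ℝ)^(-(k:ℤ)) • z) = f z := by
    intro k
    induction k with
    | zero => simp
    | succ k ih =>
      have h0 : fP ((P:ℝ)^(-((k:ℤ)+1)) • z) = 0 := hneg _ (by omega)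
      rw [fPstep] at h0
      have e2 : -((k:ℤ)+1) + 1 = -(k:ℤ) := by ring
      rw [e2] at h0
      have e3 : -((k+1:ℕ):ℤ) = -((k:ℤ)+1) := by push_cast; ring
      rw [e3]
      linarith
  have hfz : f z = 0 := by
    obtain ⟨n, hn⟩ := exists_zero_of_tendsto hf (tendsto_zpow_neg_smul hP1 z)
      (fun n => smul_ne_zero (zpow_ne_zero _ hP0) hz0)
    rw [back n] at hn
    exact hn
  -- forward constancy
  have fwd : ∀ k : ℕ, f ((P:ℝ)^((nz:ℤ)+1+k) • z) = f ((P:ℝ)^((nz:ℤ)+1) • z) := by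
    intro k
    induction k with
    | zero => norm_num
    | succ k ih =>
      have h0 : fP ((P:ℝ)^((nz:ℤ)+1+k) • z) = 0 := hnz _ (by omega)
      rw [fPstep] at h0
      have e2 : (nz:ℤ)+1+k + 1 = (nz:ℤ)+1+((k+1:ℕ):ℤ) := by push_cast; ring
      rw [e2] at h0
      linarith
  -- the telescoped sum
  have hsum : ∑ i ∈ Finset.range (nz + 1), fP (((P : ℝ) ^ (i : ℤ)) • z)
      = f ((P:ℝ)^((nz:ℤ)+1) • z) := by
    have h1 : ∀ i ∈ Finset.range (nz+1), fP ((P:ℝ)^(i:ℤ) • z)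
        = f ((P:ℝ)^(((i+1:ℕ)):ℤ) • z) - f ((P:ℝ)^((i:ℕ):ℤ) • z) := by
      intro i _
      rw [fPstep]
      have : ((i:ℤ)+1) = (((i+1:ℕ)):ℤ) := by push_cast; ring
      rw [this]
    rw [Finset.sum_congr rfl h1,
      Finset.sum_range_sub (fun i : ℕ => f ((P:ℝ)^((i:ℕ):ℤ) • z)) (nz+1)]
    have e : (((nz+1:ℕ)):ℤ) = (nz:ℤ)+1 := by push_cast; ring
    rw [e]
    simp [hfz]
  rw [hsum]
  -- now show c := f (P^{nz+1} z) is zero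
  by_contra hc
  -- for each k there is j with fQ (Q^{-(j+1)} P^{nz+1+k} z) ≠ 0
  have exjk : ∀ k : ℕ, ∃ j : ℕ,
      fQ ((Q:ℝ)^(-((j:ℤ)+1)) • ((P:ℝ)^((nz:ℤ)+1+k) • z)) ≠ 0 := by
    intro k
    by_contra hall
    push_neg at hall
    set y : V := (P:ℝ)^((nz:ℤ)+1+k) • z with hy
    have hyne : y ≠ 0 := smul_ne_zero (zpow_ne_zero _ hP0) hz0
    have down : ∀ m : ℕ, f ((Q:ℝ)^(-(m:ℤ)) • y) = f y := by
      intro m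
      induction m with
      | zero => simp
      | succ m ih =>
        have h0 := hall m
        rw [fQstep] at h0
        have e2 : -((m:ℤ)+1) + 1 = -(m:ℤ) := by ring
        rw [e2] at h0
        have e3 : -((m+1:ℕ):ℤ) = -((m:ℤ)+1) := by push_cast; ring
        rw [e3]
        linarith
    obtain ⟨m, hm⟩ := exists_zero_of_tendsto hf (tendsto_zpow_neg_smul hQ1 y)
      (fun n => smul_ne_zero (zpow_ne_zero _ hQ0) hyne)
    rw [down m] at hm
    rw [hy, fwd k] at hm
    exact hc hm
  choose j hj using exjk
  -- the support points of fQ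
  set x : ℕ → V := fun k => (Q:ℝ)^(-((j k:ℤ)+1)) • ((P:ℝ)^((nz:ℤ)+1+k) • z) with hxdef
  -- reduction mod Λ
  set φ : V → V := fun v => ∑ i, Int.fract (b.repr v i) • b i with hφdef
  have hφsub : ∀ v : V, v - φ v ∈ L := by
    intro v
    have h0 := Module.Basis.sum_repr b v
    have hv : v - φ v = ∑ i, (⌊b.repr v i⌋ : ℝ) • b i := by
      calc v - φ v
          = (∑ i, (b.repr v i) • b i) - ∑ i, Int.fract (b.repr v i) • b i := by
            simp only [hφdef]; rw [h0]
        _ = ∑ i, ((b.repr v i) - Int.fract (b.repr v i)) • b i := by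
            rw [← Finset.sum_sub_distrib]
            exact Finset.sum_congr rfl fun i _ => (sub_smul _ _ _).symm
        _ = ∑ i, (⌊b.repr v i⌋ : ℝ) • b i := by
            exact Finset.sum_congr rfl fun i _ => by rw [Int.self_sub_fract]
    rw [hv]
    refine Submodule.sum_mem _ fun i _ => ?_
    rw [Int.cast_smul_eq_zsmul ℝ]
    exact Submodule.smul_mem _ _ (Submodule.subset_span ⟨i, rfl⟩)
  set R : ℝ := ∑ i, ‖b i‖ with hRdef
  have hR0 : 0 ≤ R := Finset.sum_nonneg fun i _ => norm_nonneg _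
  have hφbdd : ∀ v : V, ‖φ v‖ ≤ R := by
    intro v
    refine (norm_sum_le _ _).trans (Finset.sum_le_sum fun i _ => ?_)
    rw [norm_smul]
    refine mul_le_of_le_one_left (norm_nonneg _) ?_
    rw [Real.norm_eq_abs, abs_of_nonneg (Int.fract_nonneg _)]
    exact (Int.fract_lt_one _).le
  have hφQ : ∀ v : V, fQ (φ v) = fQ v := by
    intro v
    have h1 := hfQ (φ v) (v - φ v) (by rw [hΛL]; exact hφsub v)
    simpa using h1.symm
  -- the finite target set
  have hT'fin : (Function.support f ∩ Metric.closedBall (0:V) ((Q:ℝ)*R)).Finite := by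
    by_contra hinf
    obtain ⟨x0, -, hx0⟩ := Set.Infinite.exists_accPt_of_subset_isCompact hinf
      (isCompact_closedBall (0:V) _) Set.inter_subset_right
    exact hf x0 (hx0.mono (principal_mono.mpr Set.inter_subset_left))
  -- the chosen support point of f associated to k
  set ψ : ℕ → V := fun k => if f (φ (x k)) = 0 then (Q:ℝ) • φ (x k) else φ (x k) with hψdef
  have hψmem : ∀ k, ψ k ∈ Function.support f ∩ Metric.closedBall (0:V) ((Q:ℝ)*R) := by
    intro k
    have hsupp : fQ (φ (x k)) ≠ 0 := by rw [hφQ]; exact hj k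
    rw [hfQdef] at hsupp
    simp only [hψdef]
    by_cases h : f (φ (x k)) = 0
    · rw [if_pos h]
      constructor
      · intro h4
        exact hsupp (by rw [h4, h, sub_zero])
      · rw [Metric.mem_closedBall, dist_zero_right, norm_smul, Real.norm_eq_abs,
          abs_of_pos (by linarith)]
        exact mul_le_mul_of_nonneg_left (hφbdd _) (by linarith)
    · rw [if_neg h]
      refine ⟨h, ?_⟩
      rw [Metric.mem_closedBall, dist_zero_right]
      calc ‖φ (x k)‖ ≤ R := hφbdd _
        _ ≤ (Q:ℝ) * R := by nlinarith
  haveI := hT'fin.to_subtype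
  obtain ⟨k, k', hkk', hpair⟩ := Finite.exists_ne_map_eq_of_infinite
    (fun k : ℕ => ((⟨ψ k, hψmem k⟩ :
        ↥(Function.support f ∩ Metric.closedBall (0:V) ((Q:ℝ)*R))),
      (if f (φ (x k)) = 0 then true else false)))
  have h1 : ψ k = ψ k' := congrArg Subtype.val (congrArg Prod.fst hpair)
  have h2 : (if f (φ (x k)) = 0 then true else false)
      = (if f (φ (x k')) = 0 then true else false) := congrArg Prod.snd hpair
  have hφeq : φ (x k) = φ (x k') := by
    by_cases h : f (φ (x k)) = 0
    · by_cases h' : f (φ (x k')) = 0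
      · simp only [hψdef] at h1; simp only [if_pos h, if_pos h'] at h1
        exact smul_right_injective V hQ0 h1
      · rw [if_pos h, if_neg h'] at h2; exact absurd h2 (by simp)
    · by_cases h' : f (φ (x k')) = 0
      · rw [if_neg h, if_pos h'] at h2; exact absurd h2 (by simp)
      · simp only [hψdef] at h1; simp only [if_neg h, if_neg h'] at h1; exact h1
  have hlam : x k - x k' ∈ L := by
    have h3 := Submodule.sub_mem L (hφsub (x k)) (hφsub (x k'))
    have h4 : (x k - φ (x k)) - (x k' - φ (x k')) = x k - x k' := by
      rw [hφeq]; abel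
    rwa [h4] at h3
  -- express x k - x k' as a rational multiple of z
  have hx : ∀ k, x k = ((Q:ℝ)^(-((j k:ℤ)+1)) * (P:ℝ)^((nz:ℤ)+1+k)) • z := by
    intro k; simp only [hxdef]; rw [smul_smul]
  set q : ℚ := (Q:ℚ)^(-((j k:ℤ)+1)) * (P:ℚ)^((nz:ℤ)+1+k)
      - (Q:ℚ)^(-((j k':ℤ)+1)) * (P:ℚ)^((nz:ℤ)+1+k') with hqdef
  have hcast : ((q:ℚ):ℝ) = (Q:ℝ)^(-((j k:ℤ)+1)) * (P:ℝ)^((nz:ℤ)+1+k)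
      - (Q:ℝ)^(-((j k':ℤ)+1)) * (P:ℝ)^((nz:ℤ)+1+k') := by
    rw [hqdef]; push_cast; ring
  have hdiff : x k - x k' = ((q:ℚ):ℝ) • z := by
    rw [hx k, hx k', ← sub_smul, hcast]
  have hPQne : (P:ℚ) ≠ 0 ∧ (Q:ℚ) ≠ 0 := by
    constructor <;> [exact_mod_cast (by omega : P ≠ 0); exact_mod_cast (by omega : Q ≠ 0)]
  by_cases hq : q = 0
  · -- multiplicative independence violated
    have h5 : (Q:ℚ)^(-((j k:ℤ)+1)) * (P:ℚ)^((nz:ℤ)+1+k)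
        = (Q:ℚ)^(-((j k':ℤ)+1)) * (P:ℚ)^((nz:ℤ)+1+k') := by
      have := sub_eq_zero.mp (hqdef ▸ hq)
      linarith [this]
    have key : (P:ℚ)^(((nz:ℤ)+1+k) - ((nz:ℤ)+1+k'))
        = (Q:ℚ)^((-((j k':ℤ)+1)) - (-((j k:ℤ)+1))) := by
      rw [zpow_sub₀ hPQne.1, zpow_sub₀ hPQne.2,
        div_eq_div_iff (zpow_ne_zero _ hPQne.1) (zpow_ne_zero _ hPQne.2)]
      linear_combination h5
    obtain ⟨ha, hb⟩ := hPQ _ _ key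
    exact hkk' (by omega)
  · -- z would be in the rational span of Λ
    have hqR : ((q:ℚ):ℝ) ≠ 0 := by exact_mod_cast hq
    have hzval : z = ((q⁻¹:ℚ):ℝ) • (x k - x k') := by
      rw [hdiff, smul_smul, Rat.cast_inv, inv_mul_cancel₀ hqR, one_smul]
    refine hz ⟨1, ![q⁻¹], ![x k - x k'], ?_, ?_⟩
    · intro i
      fin_cases i
      simp only [Matrix.cons_val_zero]
      rw [hΛL]; exact hlam
    · rw [Fin.sum_univ_one]
      simpa using hzval
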